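/- arXiv:2512.02926 — 4 statements merged into one kernel-verified Lean document; each statement's English description precedes it below -/
import Mathlib

section
/- Auxiliary limit for the derivative term: Let ϑ ∈ 𝒱 be continuously differentiable on (0,∞) and monotone on a neighborhood of +∞, with degree α ≥ 0 and ϑ(log n) → ∞ as n → ∞. Then (1/ϑ(log n)) ∫_3^n | (d/dt) ϑ(log t) | / (log log t) dt → 0 as n → ∞. -/
open MeasureTheory Filter Real Set

noncomputable section

/-- `L` is slowly varying at infinity. -/
def SlowlyVarying (L : ℝ → ℝ) : Prop :=
  ∀ c : ℝ, 0 < c → Tendsto (fun x => L (c * x) / L x) atTop (nhds 1)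

/-- `ϑ` belongs to the class `𝒱` with degree `α`. -/
def MemV (ϑ : ℝ → ℝ) (α : ℝ) : Prop :=
  ϑ 0 = 0 ∧ 0 ≤ α ∧
    ∃ F L : ℝ → ℝ, (∀ x, ϑ x = F x * L x) ∧
      Tendsto (fun x => F x / x ^ α) atTop (nhds 1) ∧ SlowlyVarying L

/-- If `f` is monotone on `[A, ∞)` and has derivative `d` at `t ≥ A`, then `0 ≤ d`. -/
lemma deriv_nonneg_of_monotoneOn' {f : ℝ → ℝ} {A t d : ℝ}
    (hf : MonotoneOn f (Set.Ici A)) (ht : A ≤ t) (hd : HasDerivAt f d t) : 0 ≤ d := by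
  have h := hasDerivAt_iff_tendsto_slope.1 hd
  have h' : Tendsto (slope f t) (nhdsWithin t (Set.Ioi t)) (nhds d) :=
    h.mono_left (nhdsWithin_mono _ fun x hx => ne_of_gt hx)
  refine ge_of_tendsto h' ?_
  filter_upwards [self_mem_nhdsWithin] with x hx
  have hx' : t < x := hx
  have h1 : f t ≤ f x := hf ht (le_trans ht hx'.le) hx'.le
  have h2 : 0 ≤ (f x - f t) / (x - t) := div_nonneg (by linarith) (by linarith)
  simpa [slope_def_field] using h2

/-- If `f` is antitone on `[A, ∞)` and has derivative `d` at `t ≥ A`, then `d ≤ 0`. -/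
lemma deriv_nonpos_of_antitoneOn' {f : ℝ → ℝ} {A t d : ℝ}
    (hf : AntitoneOn f (Set.Ici A)) (ht : A ≤ t) (hd : HasDerivAt f d t) : d ≤ 0 := by
  have h : 0 ≤ -d := by
    refine deriv_nonneg_of_monotoneOn' (f := fun x => -f x) (A := A)
      (fun a ha b hb hab => by simpa using hf ha hb hab) ht hd.neg
  linarith

/-- Auxiliary limit for the derivative term: for `ϑ ∈ 𝒱` continuously differentiable on
`(0,∞)`, monotone near `+∞`, with `ϑ(log n) → ∞`, one has
`(1/ϑ(log n)) ∫_3^n |d/dt ϑ(log t)| / log log t dt → 0` as `n → ∞`. -/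
theorem aux_limit_derivative_term
    (ϑ : ℝ → ℝ) (α : ℝ) (hϑ : MemV ϑ α)
    (hC1 : ContDiffOn ℝ 1 ϑ (Set.Ioi 0))
    (hmono : ∃ x₀ : ℝ, MonotoneOn ϑ (Set.Ici x₀) ∨ AntitoneOn ϑ (Set.Ici x₀))
    (hinf : Tendsto (fun n : ℕ => ϑ (Real.log n)) atTop atTop) :
    Tendsto
      (fun n : ℕ =>
        (ϑ (Real.log n))⁻¹ *
          ∫ t in Set.Icc (3 : ℝ) (n : ℝ),
            |deriv (fun s : ℝ => ϑ (Real.log s)) t| / Real.log (Real.log t))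
      atTop (nhds 0) := by
  obtain ⟨x₀, hm⟩ := hmono
  set g : ℝ → ℝ := fun s => ϑ (Real.log s) with hgdef
  -- differentiability of ϑ on (0, ∞)
  have hϑdiff : ∀ y ∈ Ioi (0:ℝ), DifferentiableAt ℝ ϑ y := fun y hy =>
    ((hC1.differentiableOn one_ne_zero) y hy).differentiableAt (isOpen_Ioi.mem_nhds hy)
  -- derivative of g on (1, ∞)
  have hgd : ∀ t ∈ Ioi (1:ℝ), HasDerivAt g (deriv ϑ (Real.log t) * t⁻¹) t := by
    intro t ht
    have ht' : (1:ℝ) < t := ht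
    have h1 : (0:ℝ) < Real.log t := Real.log_pos ht'
    have hlog : HasDerivAt Real.log t⁻¹ t := Real.hasDerivAt_log (by linarith)
    exact ((hϑdiff _ h1).hasDerivAt.comp t hlog)
  have hgderiv : ∀ t ∈ Ioi (1:ℝ), deriv g t = deriv ϑ (Real.log t) * t⁻¹ :=
    fun t ht => (hgd t ht).deriv
  -- continuity of deriv ϑ on (0, ∞)
  have hϑ' : ContinuousOn (deriv ϑ) (Ioi (0:ℝ)) :=
    hC1.continuousOn_deriv_of_isOpen isOpen_Ioi le_rfl
  -- continuity of deriv g on (1, ∞)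
  have hgc : ContinuousOn (deriv g) (Ioi (1:ℝ)) := by
    have hmaps : MapsTo Real.log (Ioi (1:ℝ)) (Ioi (0:ℝ)) := fun t ht => Real.log_pos ht
    have hlogc : ContinuousOn Real.log (Ioi (1:ℝ)) :=
      Real.continuousOn_log.mono (fun t ht => by
        simp only [mem_compl_iff, mem_singleton_iff]
        have : (1:ℝ) < t := ht
        intro h; rw [h] at this; linarith)
    have hc1 : ContinuousOn (fun t => deriv ϑ (Real.log t) * t⁻¹) (Ioi (1:ℝ)) := by
      refine ContinuousOn.mul (hϑ'.comp hlogc hmaps) ?_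
      refine ContinuousOn.inv₀ continuousOn_id fun t ht => ?_
      have : (1:ℝ) < t := ht
      intro h; rw [h] at this; linarith
    exact hc1.congr hgderiv
  have hlog3 : (1:ℝ) < Real.log 3 := by
    rw [Real.lt_log_iff_exp_lt (by norm_num)]
    have := Real.exp_one_lt_d9
    linarith
  -- the integrand Φ
  set Φ : ℝ → ℝ := fun t => |deriv g t| / Real.log (Real.log t) with hΦdef
  have hloglog : ∀ t : ℝ, 3 ≤ t → 0 < Real.log (Real.log t) := by
    intro t ht
    have h1 : Real.log 3 ≤ Real.log t := Real.log_le_log (by norm_num) ht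
    exact Real.log_pos (lt_of_lt_of_le hlog3 h1)
  have hΦc : ContinuousOn Φ (Ici (3:ℝ)) := by
    have hsub : Ici (3:ℝ) ⊆ Ioi (1:ℝ) := fun t ht => lt_of_lt_of_le (by norm_num : (1:ℝ) < 3) ht
    have hlogc : ContinuousOn Real.log (Ici (3:ℝ)) :=
      Real.continuousOn_log.mono (fun t ht => by
        simp only [mem_compl_iff, mem_singleton_iff]
        have : (3:ℝ) ≤ t := ht
        intro h; rw [h] at this; linarith)
    have hloglogc : ContinuousOn (fun t => Real.log (Real.log t)) (Ici (3:ℝ)) := by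
      refine Real.continuousOn_log.comp hlogc fun t ht => ?_
      simp only [mem_compl_iff, mem_singleton_iff]
      have h1 : Real.log 3 ≤ Real.log t := Real.log_le_log (by norm_num) ht
      intro h; rw [h] at h1; linarith
    exact ((hgc.mono hsub).abs).div hloglogc fun t ht => (hloglog t ht).ne'
  have hΦnonneg : ∀ t : ℝ, 3 ≤ t → 0 ≤ Φ t := fun t ht =>
    div_nonneg (abs_nonneg _) (hloglog t ht).le
  -- integrability of Φ on compact subintervals of [3, ∞)
  have hΦint : ∀ a b : ℝ, 3 ≤ a → IntegrableOn Φ (Icc a b) := by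
    intro a b ha
    exact (hΦc.mono (fun t ht => le_trans ha ht.1)).integrableOn_compact isCompact_Icc
  rw [NormedAddCommGroup.tendsto_nhds_zero]
  intro ε hε
  set δ : ℝ := ε / 3 with hδdef
  have hδ : 0 < δ := by positivity
  set A : ℝ := max 3 (max (Real.exp x₀) (Real.exp (Real.exp δ⁻¹))) with hAdef
  have hA3 : (3:ℝ) ≤ A := le_max_left _ _
  have hA1 : (1:ℝ) < A := by linarith
  have hA0 : (0:ℝ) < A := by linarith
  have hAx₀ : x₀ ≤ Real.log A := by
    rw [Real.le_log_iff_exp_le hA0]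
    exact le_trans (le_max_left _ _) (le_max_right _ _)
  have hAδ : δ⁻¹ ≤ Real.log (Real.log A) := by
    have h1 : Real.exp (Real.exp δ⁻¹) ≤ A :=
      le_trans (le_max_right _ _) (le_max_right _ _)
    have h2 : Real.exp δ⁻¹ ≤ Real.log A := by
      rw [Real.le_log_iff_exp_le hA0]; exact h1
    rw [Real.le_log_iff_exp_le (lt_of_lt_of_le (Real.exp_pos _) h2)]
    exact h2
  set C : ℝ := ∫ t in Icc (3:ℝ) A, Φ t with hCdef
  have hC0 : 0 ≤ C :=
    setIntegral_nonneg measurableSet_Icc fun t ht => hΦnonneg t ht.1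
  -- g is monotone (or antitone) on [A, ∞)
  have hgm : MonotoneOn g (Ici A) ∨ AntitoneOn g (Ici A) := by
    have hmaps : ∀ s ∈ Ici A, Real.log s ∈ Ici x₀ := fun s hs =>
      le_trans hAx₀ (Real.log_le_log hA0 hs)
    have hlogmono : ∀ s₁ ∈ Ici A, ∀ s₂ ∈ Ici A, s₁ ≤ s₂ → Real.log s₁ ≤ Real.log s₂ :=
      fun s₁ hs₁ s₂ _ h => Real.log_le_log (lt_of_lt_of_le hA0 hs₁) h
    rcases hm with hm | hm
    · exact Or.inl fun s₁ hs₁ s₂ hs₂ h =>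
        hm (hmaps s₁ hs₁) (hmaps s₂ hs₂) (hlogmono s₁ hs₁ s₂ hs₂ h)
    · exact Or.inr fun s₁ hs₁ s₂ hs₂ h =>
        hm (hmaps s₁ hs₁) (hmaps s₂ hs₂) (hlogmono s₁ hs₁ s₂ hs₂ h)
  -- eventual conditions
  have hev1 : ∀ᶠ n : ℕ in atTop, A ≤ (n : ℝ) :=
    tendsto_natCast_atTop_atTop.eventually_ge_atTop A
  have hev2 : ∀ᶠ n : ℕ in atTop,
      max 1 ((C + δ * |ϑ (Real.log A)|) / δ) ≤ ϑ (Real.log n) :=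
    hinf.eventually_ge_atTop _
  filter_upwards [hev1, hev2] with n hn1 hn2
  set N : ℝ := (n : ℝ) with hNdef
  have hϑN1 : (1:ℝ) ≤ ϑ (Real.log N) := le_trans (le_max_left _ _) hn2
  have hϑNpos : (0:ℝ) < ϑ (Real.log N) := by linarith
  have hϑN2 : (C + δ * |ϑ (Real.log A)|) / δ ≤ ϑ (Real.log N) :=
    le_trans (le_max_right _ _) hn2
  have h3N : (3:ℝ) ≤ N := le_trans hA3 hn1
  -- split the integral
  have hsplit : ∫ t in Icc (3:ℝ) N, Φ t = C + ∫ t in Icc A N, Φ t := by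
    have e1 : ∫ t in Icc (3:ℝ) N, Φ t = ∫ t in Ioc (3:ℝ) N, Φ t :=
      integral_Icc_eq_integral_Ioc
    have e2 : C = ∫ t in Ioc (3:ℝ) A, Φ t := integral_Icc_eq_integral_Ioc
    have e3 : ∫ t in Icc A N, Φ t = ∫ t in Ioc A N, Φ t :=
      integral_Icc_eq_integral_Ioc
    rw [e1, e2, e3]
    rw [← Set.Ioc_union_Ioc_eq_Ioc hA3 hn1]
    rw [setIntegral_union (Set.Ioc_disjoint_Ioc_of_le le_rfl) measurableSet_Ioc
      ((hΦint 3 A le_rfl).mono_set Set.Ioc_subset_Icc_self)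
      ((hΦint A N hA3).mono_set Set.Ioc_subset_Icc_self)]
  -- bound the tail integral
  have habs_int : IntegrableOn (fun t => |deriv g t|) (Icc A N) := by
    refine ((hgc.mono ?_).abs).integrableOn_compact isCompact_Icc
    exact fun t ht => lt_of_lt_of_le hA1 ht.1
  have hderiv_int : IntegrableOn (deriv g) (Icc A N) := by
    refine (hgc.mono ?_).integrableOn_compact isCompact_Icc
    exact fun t ht => lt_of_lt_of_le hA1 ht.1
  have htail1 : ∫ t in Icc A N, Φ t ≤ ∫ t in Icc A N, δ * |deriv g t| := by
    refine setIntegral_mono_on ((hΦint A N hA3).mono_set le_rfl)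
      (habs_int.const_mul δ) measurableSet_Icc fun t ht => ?_
    have ht3 : (3:ℝ) ≤ t := le_trans hA3 ht.1
    have hl : 0 < Real.log (Real.log t) := hloglog t ht3
    have hlA : δ⁻¹ ≤ Real.log (Real.log t) := by
      refine le_trans hAδ ?_
      refine Real.log_le_log (Real.log_pos (by linarith)) ?_
      exact Real.log_le_log hA0 ht.1
    rw [hΦdef]
    rw [div_le_iff₀ hl]
    calc |deriv g t| = δ * |deriv g t| * δ⁻¹ := by
          field_simp
      _ ≤ δ * |deriv g t| * Real.log (Real.log t) := by
          apply mul_le_mul_of_nonneg_left hlA (by positivity)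
  have htail2 : ∫ t in Icc A N, δ * |deriv g t| = δ * ∫ t in Icc A N, |deriv g t| :=
    MeasureTheory.integral_const_mul δ _
  -- FTC: ∫_A^N |g'| = |g N - g A|
  have hftc : ∫ t in Icc A N, |deriv g t| = |g N - g A| := by
    have hder : ∀ t ∈ Set.uIcc A N, HasDerivAt g (deriv g t) t := by
      intro t ht
      rw [Set.uIcc_of_le hn1] at ht
      have ht1 : (1:ℝ) < t := lt_of_lt_of_le hA1 ht.1
      have := hgd t ht1
      rwa [← hgderiv t ht1] at this
    have hii : IntervalIntegrable (deriv g) volume A N := by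
      rw [intervalIntegrable_iff_integrableOn_Ioc_of_le hn1]
      exact hderiv_int.mono_set Set.Ioc_subset_Icc_self
    have hFTC : ∫ t in A..N, deriv g t = g N - g A :=
      intervalIntegral.integral_eq_sub_of_hasDerivAt hder hii
    rcases hgm with hgm | hgm
    · -- monotone case: deriv g ≥ 0 on [A, N]
      have hsign : ∀ t ∈ Icc A N, 0 ≤ deriv g t := by
        intro t ht
        have ht1 : (1:ℝ) < t := lt_of_lt_of_le hA1 ht.1
        have hD := hgd t ht1
        have := deriv_nonneg_of_monotoneOn' hgm ht.1 hD
        rwa [← hgderiv t ht1] at this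
      have e1 : ∫ t in Icc A N, |deriv g t| = ∫ t in Icc A N, deriv g t := by
        refine setIntegral_congr_fun measurableSet_Icc fun t ht => ?_
        exact abs_of_nonneg (hsign t ht)
      have e2 : ∫ t in Icc A N, deriv g t = ∫ t in A..N, deriv g t := by
        rw [intervalIntegral.integral_of_le hn1, integral_Icc_eq_integral_Ioc]
      have hge : g A ≤ g N := hgm (self_mem_Ici) hn1 hn1
      rw [e1, e2, hFTC, abs_of_nonneg (by linarith)]
    · -- antitone case: deriv g ≤ 0 on [A, N]
      have hsign : ∀ t ∈ Icc A N, deriv g t ≤ 0 := by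
        intro t ht
        have ht1 : (1:ℝ) < t := lt_of_lt_of_le hA1 ht.1
        have hD := hgd t ht1
        have := deriv_nonpos_of_antitoneOn' hgm ht.1 hD
        rwa [← hgderiv t ht1] at this
      have e1 : ∫ t in Icc A N, |deriv g t| = ∫ t in Icc A N, -deriv g t := by
        refine setIntegral_congr_fun measurableSet_Icc fun t ht => ?_
        exact abs_of_nonpos (hsign t ht)
      have e2 : ∫ t in Icc A N, -deriv g t = -∫ t in A..N, deriv g t := by
        rw [intervalIntegral.integral_of_le hn1, integral_Icc_eq_integral_Ioc,
          integral_neg]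
      have hge : g N ≤ g A := hgm (self_mem_Ici) hn1 hn1
      rw [e1, e2, hFTC, abs_of_nonpos (by linarith)]
  -- assemble the bound
  have hgNabs : |g N - g A| ≤ ϑ (Real.log N) + |ϑ (Real.log A)| := by
    have h1 : |g N - g A| ≤ |g N| + |g A| := abs_sub _ _
    have h2 : |g N| = ϑ (Real.log N) := abs_of_pos hϑNpos
    rw [h2] at h1
    exact h1
  have hIbound : ∫ t in Icc (3:ℝ) N, Φ t ≤ C + δ * (ϑ (Real.log N) + |ϑ (Real.log A)|) := by
    rw [hsplit]
    have h1 : ∫ t in Icc A N, Φ t ≤ δ * |g N - g A| := by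
      calc ∫ t in Icc A N, Φ t ≤ ∫ t in Icc A N, δ * |deriv g t| := htail1
        _ = δ * ∫ t in Icc A N, |deriv g t| := htail2
        _ = δ * |g N - g A| := by rw [hftc]
    have h2 : δ * |g N - g A| ≤ δ * (ϑ (Real.log N) + |ϑ (Real.log A)|) :=
      mul_le_mul_of_nonneg_left hgNabs hδ.le
    linarith
  have hInonneg : 0 ≤ ∫ t in Icc (3:ℝ) N, Φ t :=
    setIntegral_nonneg measurableSet_Icc fun t ht => hΦnonneg t ht.1
  -- final estimate
  have hval : (ϑ (Real.log N))⁻¹ * ∫ t in Icc (3:ℝ) N, Φ t ≤ 2 * δ := by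
    have h1 : (ϑ (Real.log N))⁻¹ * ∫ t in Icc (3:ℝ) N, Φ t ≤
        (ϑ (Real.log N))⁻¹ * (C + δ * (ϑ (Real.log N) + |ϑ (Real.log A)|)) :=
      mul_le_mul_of_nonneg_left hIbound (inv_nonneg.mpr hϑNpos.le)
    have h2 : (ϑ (Real.log N))⁻¹ * (C + δ * (ϑ (Real.log N) + |ϑ (Real.log A)|)) =
        (C + δ * |ϑ (Real.log A)|) / ϑ (Real.log N) + δ := by
      field_simp
      ring
    have h3 : (C + δ * |ϑ (Real.log A)|) / ϑ (Real.log N) ≤ δ := by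
      rw [div_le_iff₀ hϑNpos]
      calc C + δ * |ϑ (Real.log A)|
          = δ * ((C + δ * |ϑ (Real.log A)|) / δ) := by field_simp
        _ ≤ δ * ϑ (Real.log N) := mul_le_mul_of_nonneg_left hϑN2 hδ.le
    calc (ϑ (Real.log N))⁻¹ * ∫ t in Icc (3:ℝ) N, Φ t
        ≤ (C + δ * |ϑ (Real.log A)|) / ϑ (Real.log N) + δ := by rw [← h2]; exact h1
      _ ≤ δ + δ := by linarith
      _ = 2 * δ := by ring
  have hvalnonneg : 0 ≤ (ϑ (Real.log N))⁻¹ * ∫ t in Icc (3:ℝ) N, Φ t :=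
    mul_nonneg (inv_nonneg.mpr hϑNpos.le) hInonneg
  have : ‖(ϑ (Real.log N))⁻¹ * ∫ t in Icc (3:ℝ) N, Φ t‖ =
      (ϑ (Real.log N))⁻¹ * ∫ t in Icc (3:ℝ) N, Φ t := by
    rw [Real.norm_eq_abs, abs_of_nonneg hvalnonneg]
  calc ‖(ϑ (Real.log N))⁻¹ * ∫ t in Icc (3:ℝ) N, Φ t‖
      = (ϑ (Real.log N))⁻¹ * ∫ t in Icc (3:ℝ) N, Φ t := this
    _ ≤ 2 * δ := hval
    _ < ε := by rw [hδdef]; linarith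
end
end

section
/- Law of the random prime-power product: Let n ≥ 2 and let k be a positive integer all of whose prime factors are at most n (in particular, any k ≤ n). Then P[ Π_{p ∈ P_n} p^{ε_p} = k ] = (1/k) Π_{p ∈ P_n} (1 − 1/p). -/
open MeasureTheory ProbabilityTheory Filter Real Set
open scoped ENNReal NNReal

noncomputable section

/-- The set of primes at most `n`, as a finset. -/
def primesUpTo (n : ℕ) : Finset ℕ := (Finset.range (n + 1)).filter Nat.Prime

/-- `X` is geometric with parameter `1 - 1/p`: `P[X = m] = (1 - 1/p) p^{-m}`. -/
def GeomLaw {Ω : Type*} [MeasurableSpace Ω] (P : Measure Ω) (p : ℕ) (X : Ω → ℕ) : Prop :=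
  ∀ m : ℕ, P {ω | X ω = m} = (1 - (p : ℝ≥0∞)⁻¹) * ((p : ℝ≥0∞)⁻¹) ^ m

lemma mem_primesUpTo {n p : ℕ} : p ∈ primesUpTo n ↔ p ≤ n ∧ p.Prime := by
  simp [primesUpTo, Finset.mem_filter, Nat.lt_succ_iff, and_comm]

/-- Law of the random prime-power product: if every prime factor of `k ≥ 1` is at most `n`,
then `P[∏_{p ∈ Pₙ} p^{ε_p} = k] = (1/k) ∏_{p ∈ Pₙ} (1 − 1/p)`. -/
theorem law_of_prime_power_product
    {Ω : Type*} [MeasurableSpace Ω] (P : Measure Ω) [IsProbabilityMeasure P]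
    (ε : ℕ → Ω → ℕ) (hmeas : ∀ p, Nat.Prime p → Measurable (ε p))
    (hindep : iIndepFun (fun p : {p : ℕ // p.Prime} => ε p) P)
    (hgeom : ∀ p, Nat.Prime p → GeomLaw P p (ε p))
    (n : ℕ) (hn : 2 ≤ n) (k : ℕ) (hk : 1 ≤ k)
    (hdiv : ∀ p : ℕ, Nat.Prime p → p ∣ k → p ≤ n) :
    P {ω | ∏ p ∈ primesUpTo n, p ^ ε p ω = k} =
      (k : ℝ≥0∞)⁻¹ * ∏ p ∈ primesUpTo n, (1 - (p : ℝ≥0∞)⁻¹) := by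
  classical
  have hk0 : k ≠ 0 := by omega
  set f : ℕ → ℕ := fun p => Nat.factorization k p with hfdef
  -- Step 1 : the event is an intersection of independent events
  have hset : {ω | ∏ p ∈ primesUpTo n, p ^ ε p ω = k}
      = ⋂ p ∈ primesUpTo n, {ω | ε p ω = f p} := by
    ext ω
    simp only [Set.mem_setOf_eq, Set.mem_iInter]
    constructor
    · intro h p hp
      obtain ⟨hpn, hp'⟩ := mem_primesUpTo.mp hp
      have hfac := congrArg Nat.factorization h
      rw [Nat.factorization_prod (fun q hq =>
        pow_ne_zero _ (mem_primesUpTo.mp hq).2.pos.ne')] at hfac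
      have := DFunLike.congr_fun hfac p
      rw [Finset.sum_apply'] at this
      rw [Finset.sum_congr rfl (fun q hq => by
        rw [(mem_primesUpTo.mp hq).2.factorization_pow])] at this
      rw [Finset.sum_eq_single p (fun q hq hqp => by
            simp [Finsupp.single_apply, hqp]) (fun h' => absurd hp h')] at this
      rw [Finsupp.single_eq_same] at this
      exact this
    · intro h
      have hsupp : k.factorization.support ⊆ primesUpTo n := by
        intro p hp
        have hp' := Nat.prime_of_mem_primeFactors (by simpa using hp)
        have hpk : p ∣ k := Nat.dvd_of_mem_primeFactors (by simpa using hp)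
        exact mem_primesUpTo.mpr ⟨hdiv p hp' hpk, hp'⟩
      calc ∏ p ∈ primesUpTo n, p ^ ε p ω = ∏ p ∈ primesUpTo n, p ^ f p := by
            exact Finset.prod_congr rfl fun p hp => by rw [h p hp]
        _ = ∏ p ∈ k.factorization.support, p ^ f p := by
            refine (Finset.prod_subset hsupp fun p _ hp => ?_).symm
            simp only [hfdef]
            rw [Finsupp.notMem_support_iff.mp hp, pow_zero]
        _ = k := Nat.factorization_prod_pow_eq_self hk0
  -- Step 2 : independence over the subtype finset
  set S : Finset {p : ℕ // p.Prime} := (primesUpTo n).subtype Nat.Prime with hS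
  have hsetS : (⋂ p ∈ primesUpTo n, {ω | ε p ω = f p})
      = ⋂ p ∈ S, {ω | ε (p : ℕ) ω = f p} := by
    ext ω
    simp only [Set.mem_iInter, hS, Finset.mem_subtype]
    constructor
    · intro h p hp; exact h p hp
    · intro h p hp
      exact h ⟨p, (mem_primesUpTo.mp hp).2⟩ hp
  have hmeasS : ∀ p : {p : ℕ // p.Prime}, p ∈ S →
      MeasurableSet[(inferInstance : MeasurableSpace ℕ).comap (ε p)]
        {ω | ε (p : ℕ) ω = f p} := by
    intro p _
    exact ⟨{f p}, measurableSet_singleton _, by ext ω; simp [Set.preimage]⟩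
  have hprob := hindep.meas_biInter (S := S) hmeasS
  rw [hset, hsetS, hprob]
  -- Step 3 : compute the product
  have hterm : ∀ p : {p : ℕ // p.Prime}, p ∈ S →
      P {ω | ε (p : ℕ) ω = f p}
        = (1 - ((p : ℕ) : ℝ≥0∞)⁻¹) * (((p : ℕ) : ℝ≥0∞)⁻¹) ^ f p := by
    intro p _
    exact hgeom p p.2 (f p)
  rw [Finset.prod_congr rfl hterm, Finset.prod_mul_distrib]
  have h1 : (∏ p ∈ S, (1 - ((p : ℕ) : ℝ≥0∞)⁻¹))
      = ∏ p ∈ primesUpTo n, (1 - (p : ℝ≥0∞)⁻¹) := by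
    rw [hS]
    exact Finset.prod_subtype_of_mem (fun p : ℕ => (1 - (p : ℝ≥0∞)⁻¹)) fun p hp => (mem_primesUpTo.mp hp).2
  have hprod : ∏ p ∈ primesUpTo n, p ^ f p = k := by
    have hsupp : k.factorization.support ⊆ primesUpTo n := by
      intro p hp
      have hp' := Nat.prime_of_mem_primeFactors (by simpa using hp)
      have hpk : p ∣ k := Nat.dvd_of_mem_primeFactors (by simpa using hp)
      exact mem_primesUpTo.mpr ⟨hdiv p hp' hpk, hp'⟩
    calc ∏ p ∈ primesUpTo n, p ^ f p
        = ∏ p ∈ k.factorization.support, p ^ f p := by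
          refine (Finset.prod_subset hsupp fun p _ hp => ?_).symm
          simp only [hfdef]
          rw [Finsupp.notMem_support_iff.mp hp, pow_zero]
      _ = k := Nat.factorization_prod_pow_eq_self hk0
  have h2 : (∏ p ∈ S, (((p : ℕ) : ℝ≥0∞)⁻¹) ^ f p) = (k : ℝ≥0∞)⁻¹ := by
    rw [hS, Finset.prod_subtype_of_mem (fun p : ℕ => ((p : ℝ≥0∞)⁻¹) ^ f p)
      (fun p hp => (mem_primesUpTo.mp hp).2)]
    calc ∏ p ∈ primesUpTo n, ((p : ℝ≥0∞))⁻¹ ^ f p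
        = ∏ p ∈ primesUpTo n, ((p : ℝ≥0∞) ^ f p)⁻¹ :=
          Finset.prod_congr rfl fun p _ => (ENNReal.inv_pow).symm
      _ = (∏ p ∈ primesUpTo n, (p : ℝ≥0∞) ^ f p)⁻¹ := by
          refine (ENNReal.prod_inv_distrib fun p hp _ _ _ => Or.inl ?_).symm
          simp only [Finset.mem_coe] at hp
          exact pow_ne_zero _ (by exact_mod_cast (mem_primesUpTo.mp hp).2.pos.ne')
      _ = (k : ℝ≥0∞)⁻¹ := by
          congr 1
          exact_mod_cast congrArg (Nat.cast : ℕ → ℝ≥0∞) hprod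
  rw [h1, h2, mul_comm]
end
end

section
/- Harmonic representation of additive functionals: Let n ≥ 2, let A_n be the event { Π_{p ∈ P_n} p^{ε_p} ≤ n }, and let φ : ℕ → ℝ be any additive arithmetic function (φ(ab) = φ(a) + φ(b) for coprime a, b, determined by its values on prime powers). Then for every k ∈ {1,…,n}, P[ Π_{p ∈ P_n} p^{ε_p} = k | A_n ] = 1/(k L_n) where L_n = Σ_{j=1}^n 1/j; consequently φ(H_n) has the same law as Σ_{p ∈ P_n} φ(p^{ε_p}) conditioned on A_n, i.e. for every bounded measurable Ψ : ℝ → ℝ, E[Ψ(φ(H_n))] = E[ Ψ( Σ_{p ∈ P_n} φ(p^{ε_p}) ) · 1_{A_n} ] / P[A_n]. -/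
open MeasureTheory ProbabilityTheory Filter Real Set
open scoped ENNReal NNReal

noncomputable section

/-- The random variable `H` follows the harmonic distribution on `{1, …, n}`. -/
def HarmonicLaw {Ω : Type*} [MeasurableSpace Ω] (P : Measure Ω) (n : ℕ) (H : Ω → ℕ) : Prop :=
  ∀ k ∈ Finset.Icc 1 n,
    P {ω | H ω = k} = ENNReal.ofReal (1 / (k * ∑ j ∈ Finset.Icc 1 n, (1 : ℝ) / j))

lemma prod_pow_eq_iff {n k : ℕ} (hk1 : 1 ≤ k) (hkn : k ≤ n) (e : ℕ → ℕ) :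
    ∏ p ∈ primesUpTo n, p ^ e p = k ↔ ∀ p ∈ primesUpTo n, e p = k.factorization p := by
  constructor
  · rintro rfl p hp
    obtain ⟨hpn, hpp⟩ := mem_primesUpTo.mp hp
    rw [Nat.factorization_prod (fun q hq => pow_ne_zero _ (mem_primesUpTo.mp hq).2.pos.ne')]
    rw [Finsupp.finset_sum_apply]
    rw [Finset.sum_congr rfl (fun q hq => by
      rw [(mem_primesUpTo.mp hq).2.factorization_pow, Finsupp.single_apply])]
    rw [Finset.sum_ite_eq' (primesUpTo n) p e, if_pos hp]
  · intro h
    have hk0 : k ≠ 0 := by omega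
    calc ∏ p ∈ primesUpTo n, p ^ e p = ∏ p ∈ primesUpTo n, p ^ k.factorization p :=
          Finset.prod_congr rfl fun p hp => by rw [h p hp]
      _ = k := by
          conv_rhs => rw [← Nat.factorization_prod_pow_eq_self hk0]
          rw [Finsupp.prod]
          refine (Finset.prod_subset ?_ ?_).symm
          · intro p hp
            rw [Nat.support_factorization] at hp
            exact mem_primesUpTo.mpr ⟨le_trans (Nat.le_of_dvd (by omega)
              (Nat.dvd_of_mem_primeFactors hp)) hkn, Nat.prime_of_mem_primeFactors hp⟩
          · intro p _ hp
            rw [Finsupp.notMem_support_iff.mp hp, pow_zero]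

lemma phi_one (φ : ℕ → ℝ) (hφ : ∀ a b : ℕ, Nat.Coprime a b → φ (a * b) = φ a + φ b) :
    φ 1 = 0 := by
  have := hφ 1 1 (Nat.coprime_one_left 1)
  simp at this; linarith

lemma phi_prod_primes (φ : ℕ → ℝ) (hφ : ∀ a b : ℕ, Nat.Coprime a b → φ (a * b) = φ a + φ b)
    (s : Finset ℕ) (hs : ∀ p ∈ s, Nat.Prime p) (e : ℕ → ℕ) :
    φ (∏ p ∈ s, p ^ e p) = ∑ p ∈ s, φ (p ^ e p) := by
  induction s using Finset.cons_induction with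
  | empty => simpa using phi_one φ hφ
  | cons p s hp ih =>
    rw [Finset.prod_cons, Finset.sum_cons, hφ, ih (fun q hq => hs q (Finset.mem_cons_of_mem hq))]
    refine Nat.Coprime.pow_left _ (Nat.Coprime.prod_right fun q hq => Nat.Coprime.pow_right _ ?_)
    exact (Nat.coprime_primes (hs p (Finset.mem_cons_self p s))
      (hs q (Finset.mem_cons_of_mem hq))).mpr (fun h => hp (h ▸ hq))

lemma setIntegral_biUnion_const {Ω : Type*} [MeasurableSpace Ω] (P : Measure Ω)
    (s : Finset ℕ) (B : ℕ → Set Ω) (hB : ∀ k ∈ s, MeasurableSet (B k))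
    (hdisj : (s : Set ℕ).Pairwise (Function.onFun Disjoint B))
    (f : Ω → ℝ) (hf : Integrable f P) (c : ℕ → ℝ)
    (hc : ∀ k ∈ s, ∀ ω ∈ B k, f ω = c k) :
    ∫ ω in ⋃ k ∈ s, B k, f ω ∂P = ∑ k ∈ s, c k * (P (B k)).toReal := by
  rw [integral_biUnion_finset s hB hdisj (fun k _ => hf.integrableOn)]
  refine Finset.sum_congr rfl fun k hk => ?_
  rw [setIntegral_congr_fun (hB k hk) (hc k hk), setIntegral_const, smul_eq_mul, mul_comm, measureReal_def]


/-- Harmonic representation of additive functionals: with `Aₙ = {∏_{p ∈ Pₙ} p^{ε_p} ≤ n}`,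
the conditional law of `∏_{p ∈ Pₙ} p^{ε_p}` given `Aₙ` is the harmonic law on `{1,…,n}`, and
for any additive function `φ` and bounded measurable `Ψ`,
`E[Ψ(φ(Hₙ))] = E[Ψ(∑_{p ∈ Pₙ} φ(p^{ε_p})) 1_{Aₙ}]/P[Aₙ]`. -/
theorem harmonic_representation_of_additive_functionals
    {Ω : Type*} [MeasurableSpace Ω] (P : Measure Ω) [IsProbabilityMeasure P]
    (ε : ℕ → Ω → ℕ) (hmeas : ∀ p, Nat.Prime p → Measurable (ε p))
    (hindep : iIndepFun (fun p : {p : ℕ // p.Prime} => ε p) P)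
    (hgeom : ∀ p, Nat.Prime p → GeomLaw P p (ε p))
    {Ω' : Type*} [MeasurableSpace Ω'] (P' : Measure Ω') [IsProbabilityMeasure P']
    (n : ℕ) (hn : 2 ≤ n)
    (H : Ω' → ℕ) (hHmeas : Measurable H) (hH : HarmonicLaw P' n H)
    (φ : ℕ → ℝ) (hφ : ∀ a b : ℕ, Nat.Coprime a b → φ (a * b) = φ a + φ b) :
    (∀ k ∈ Finset.Icc 1 n,
      P[{ω | ∏ p ∈ primesUpTo n, p ^ ε p ω = k} | {ω | ∏ p ∈ primesUpTo n, p ^ ε p ω ≤ n}] =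
        ENNReal.ofReal (1 / (k * ∑ j ∈ Finset.Icc 1 n, (1 : ℝ) / j))) ∧
    ∀ Ψ : ℝ → ℝ, Measurable Ψ → (∃ C, ∀ x, |Ψ x| ≤ C) →
      ∫ ω, Ψ (φ (H ω)) ∂P' =
        (∫ ω in {ω | ∏ p ∈ primesUpTo n, p ^ ε p ω ≤ n},
            Ψ (∑ p ∈ primesUpTo n, φ (p ^ ε p ω)) ∂P) /
          (P {ω | ∏ p ∈ primesUpTo n, p ^ ε p ω ≤ n}).toReal := by
  classical
  have hprime : ∀ p ∈ primesUpTo n, p.Prime := fun p hp => (mem_primesUpTo.mp hp).2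
  set L : ℝ := ∑ j ∈ Finset.Icc 1 n, (1 : ℝ) / j with hLdef
  have hL1 : 1 ≤ L := by
    rw [hLdef]
    calc (1:ℝ) = 1/((1:ℕ):ℝ) := by norm_num
    _ ≤ _ := Finset.single_le_sum (f := fun j : ℕ => (1:ℝ)/j) (fun j _ => by positivity)
        (Finset.mem_Icc.mpr ⟨le_refl 1, by omega⟩)
  have hL0 : (0:ℝ) < L := lt_of_lt_of_le one_pos hL1
  -- measurability
  have hXmeas : Measurable (fun ω => ∏ p ∈ primesUpTo n, p ^ ε p ω) :=
    Finset.measurable_prod _ fun p hp => measurable_from_top.comp (hmeas p (hprime p hp))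
  have hBmeas : ∀ k : ℕ, MeasurableSet {ω | ∏ p ∈ primesUpTo n, p ^ ε p ω = k} :=
    fun k => hXmeas (measurableSet_singleton k)
  have hAmeas : MeasurableSet {ω | ∏ p ∈ primesUpTo n, p ^ ε p ω ≤ n} :=
    hXmeas measurableSet_Iic
  -- the normalizing constant
  set C : ℝ≥0∞ := ∏ p ∈ primesUpTo n, (1 - (p : ℝ≥0∞)⁻¹) with hCdef
  have hfac_ne0 : ∀ p ∈ primesUpTo n, (1 - (p : ℝ≥0∞)⁻¹) ≠ 0 := by
    intro p hp
    have h2 : 2 ≤ p := (hprime p hp).two_le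
    rw [Ne, tsub_eq_zero_iff_le, not_le]
    exact ENNReal.inv_lt_one.mpr (by exact_mod_cast Nat.lt_of_lt_of_le one_lt_two h2)
  have hC0 : C ≠ 0 := Finset.prod_ne_zero_iff.mpr hfac_ne0
  have hCtop : C ≠ ∞ :=
    (ENNReal.prod_lt_top fun p _ => lt_of_le_of_lt tsub_le_self ENNReal.one_lt_top).ne
  -- value of P[X = k]
  have hBval : ∀ k ∈ Finset.Icc 1 n,
      P {ω | ∏ p ∈ primesUpTo n, p ^ ε p ω = k} = C * (k : ℝ≥0∞)⁻¹ := by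
    intro k hk
    obtain ⟨hk1, hkn⟩ := Finset.mem_Icc.mp hk
    have hset : {ω | ∏ p ∈ primesUpTo n, p ^ ε p ω = k}
        = ⋂ i ∈ (primesUpTo n).subtype Nat.Prime, ε i.val ⁻¹' {k.factorization i.val} := by
      ext ω
      simp only [Set.mem_setOf_eq, Set.mem_iInter, Finset.mem_subtype, Subtype.forall,
        Set.mem_preimage, Set.mem_singleton_iff]
      rw [prod_pow_eq_iff hk1 hkn]
      constructor
      · intro h p hpp hp; exact h p hp
      · intro h p hp; exact h p (hprime p hp) hp
    rw [hset, hindep.meas_biInter (fun i _ =>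
      ⟨{k.factorization i.val}, measurableSet_singleton _, rfl⟩)]
    rw [Finset.prod_subtype_of_mem (fun p => P (ε p ⁻¹' {k.factorization p})) hprime]
    have hg : ∀ p ∈ primesUpTo n, P (ε p ⁻¹' {k.factorization p})
        = (1 - (p:ℝ≥0∞)⁻¹) * ((p:ℝ≥0∞)⁻¹) ^ k.factorization p :=
      fun p hp => hgeom p (hprime p hp) (k.factorization p)
    rw [Finset.prod_congr rfl hg, Finset.prod_mul_distrib]
    congr 1
    have hknat : (∏ p ∈ primesUpTo n, p ^ k.factorization p) = k :=
      (prod_pow_eq_iff hk1 hkn _).mpr fun p hp => rfl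
    calc ∏ p ∈ primesUpTo n, ((p:ℝ≥0∞)⁻¹) ^ k.factorization p
        = ∏ p ∈ primesUpTo n, ((p:ℝ≥0∞) ^ k.factorization p)⁻¹ :=
          Finset.prod_congr rfl fun p _ => (ENNReal.inv_pow).symm
      _ = (∏ p ∈ primesUpTo n, (p:ℝ≥0∞) ^ k.factorization p)⁻¹ :=
          (ENNReal.prod_inv_distrib (fun p hp q hq _ => Or.inl
            (pow_ne_zero _ (Nat.cast_ne_zero.mpr (hprime p hp).pos.ne')))).symm
      _ = ((k:ℕ):ℝ≥0∞)⁻¹ := by congr 1; exact_mod_cast hknat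
  -- A as a disjoint union
  have hXpos : ∀ ω, 1 ≤ ∏ p ∈ primesUpTo n, p ^ ε p ω := fun ω =>
    Nat.one_le_iff_ne_zero.mpr (Finset.prod_ne_zero_iff.mpr fun p hp =>
      pow_ne_zero _ (hprime p hp).pos.ne')
  have hAunion : {ω | ∏ p ∈ primesUpTo n, p ^ ε p ω ≤ n}
      = ⋃ k ∈ Finset.Icc 1 n, {ω | ∏ p ∈ primesUpTo n, p ^ ε p ω = k} := by
    ext ω
    simp only [Set.mem_setOf_eq, Set.mem_iUnion, Finset.mem_Icc, exists_prop]
    constructor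
    · intro h; exact ⟨_, ⟨hXpos ω, h⟩, rfl⟩
    · rintro ⟨k, ⟨_, hkn⟩, rfl⟩; exact hkn
  have hdisj : ((Finset.Icc 1 n : Finset ℕ) : Set ℕ).Pairwise
      (Function.onFun Disjoint fun k => {ω | ∏ p ∈ primesUpTo n, p ^ ε p ω = k}) := by
    intro a _ b _ hab
    exact Set.disjoint_left.mpr fun ω h1 h2 => hab ((h1 : _ = a).symm.trans h2)
  have hS : ∑ k ∈ Finset.Icc 1 n, ((k:ℝ≥0∞))⁻¹ = ENNReal.ofReal L := by
    rw [hLdef, ENNReal.ofReal_sum_of_nonneg (fun j _ => by positivity)]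
    refine Finset.sum_congr rfl fun k hk => ?_
    have hk1 : 1 ≤ k := (Finset.mem_Icc.mp hk).1
    have hkR : (0:ℝ) < (k:ℝ) := by exact_mod_cast hk1
    rw [one_div, ENNReal.ofReal_inv_of_pos hkR, ENNReal.ofReal_natCast]
  have hPA : P {ω | ∏ p ∈ primesUpTo n, p ^ ε p ω ≤ n} = C * ENNReal.ofReal L := by
    rw [hAunion, measure_biUnion_finset hdisj (fun k _ => hBmeas k)]
    rw [Finset.sum_congr rfl hBval, ← Finset.mul_sum, hS]
  constructor
  · intro k hk
    obtain ⟨hk1, hkn⟩ := Finset.mem_Icc.mp hk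
    have hkR : (0:ℝ) < (k:ℝ) := by exact_mod_cast hk1
    have hBsubA : {ω | ∏ p ∈ primesUpTo n, p ^ ε p ω = k}
        ⊆ {ω | ∏ p ∈ primesUpTo n, p ^ ε p ω ≤ n} := by
      intro ω hω
      simp only [Set.mem_setOf_eq] at hω ⊢
      omega
    rw [cond_apply hAmeas, Set.inter_eq_self_of_subset_right hBsubA]
    rw [hBval k hk, hPA, ENNReal.mul_inv (Or.inl hC0) (Or.inl hCtop)]
    calc C⁻¹ * (ENNReal.ofReal L)⁻¹ * (C * (k:ℝ≥0∞)⁻¹)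
        = (C⁻¹ * C) * ((ENNReal.ofReal L)⁻¹ * (k:ℝ≥0∞)⁻¹) := by ring
      _ = (ENNReal.ofReal L)⁻¹ * (k:ℝ≥0∞)⁻¹ := by
          rw [ENNReal.inv_mul_cancel hC0 hCtop, one_mul]
      _ = ENNReal.ofReal (1/(k*L)) := by
          rw [← ENNReal.ofReal_natCast k, ← ENNReal.ofReal_inv_of_pos hL0,
            ← ENNReal.ofReal_inv_of_pos hkR,
            ← ENNReal.ofReal_mul (by positivity)]
          congr 1
          rw [one_div, mul_inv]
          ring
  · rintro Ψ hΨ ⟨Cb, hCb⟩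
    have hHset : ∀ k, MeasurableSet {ω' | H ω' = k} :=
      fun k => hHmeas (measurableSet_singleton k)
    have hdisjH : ((Finset.Icc 1 n : Finset ℕ) : Set ℕ).Pairwise
        (Function.onFun Disjoint fun k => {ω' | H ω' = k}) := by
      intro a _ b _ hab
      exact Set.disjoint_left.mpr fun ω h1 h2 => hab ((h1 : _ = a).symm.trans h2)
    have hsum1 : ∑ k ∈ Finset.Icc 1 n, (1:ℝ)/(k*L) = 1 := by
      rw [Finset.sum_congr rfl (fun k _ => by rw [← div_div] : ∀ k ∈ Finset.Icc 1 n,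
        (1:ℝ)/(k*L) = (1/k)/L), ← Finset.sum_div, ← hLdef, div_self hL0.ne']
    have hUmeas : MeasurableSet (⋃ k ∈ Finset.Icc 1 n, {ω' | H ω' = k}) :=
      Finset.measurableSet_biUnion _ fun k _ => hHset k
    have hUH : P' (⋃ k ∈ Finset.Icc 1 n, {ω' | H ω' = k}) = 1 := by
      rw [measure_biUnion_finset hdisjH (fun k _ => hHset k), Finset.sum_congr rfl hH,
        ← ENNReal.ofReal_sum_of_nonneg (fun k _ => by positivity), hsum1, ENNReal.ofReal_one]
    have hcompl : P' (⋃ k ∈ Finset.Icc 1 n, {ω' | H ω' = k})ᶜ = 0 := by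
      rw [measure_compl hUmeas (measure_ne_top _ _), hUH, measure_univ, tsub_self]
    have hfmeas' : Measurable fun ω' => Ψ (φ (H ω')) :=
      hΨ.comp (measurable_from_top.comp hHmeas)
    have hint' : Integrable (fun ω' => Ψ (φ (H ω'))) P' :=
      Integrable.mono' (integrable_const Cb) hfmeas'.aestronglyMeasurable
        (ae_of_all _ fun ω => by simpa [Real.norm_eq_abs] using hCb (φ (H ω)))
    have hLHS : ∫ ω', Ψ (φ (H ω')) ∂P' = ∑ k ∈ Finset.Icc 1 n, Ψ (φ k) * (1/(k*L)) := by
      rw [← integral_add_compl hUmeas hint',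
        show P'.restrict (⋃ k ∈ Finset.Icc 1 n, {ω' | H ω' = k})ᶜ = 0 from
          Measure.restrict_eq_zero.mpr hcompl, integral_zero_measure, add_zero]
      rw [setIntegral_biUnion_const P' _ _ (fun k _ => hHset k) hdisjH _ hint'
        (fun k => Ψ (φ k)) (fun k _ ω hω => by rw [(hω : _ = k)])]
      refine Finset.sum_congr rfl fun k hk => ?_
      rw [hH k hk, ← hLdef, ENNReal.toReal_ofReal (by positivity)]
    have hfmeas : Measurable fun ω => Ψ (∑ p ∈ primesUpTo n, φ (p ^ ε p ω)) :=
      hΨ.comp (Finset.measurable_sum _ fun p hp =>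
        (measurable_from_top (f := fun m : ℕ => φ (p ^ m))).comp (hmeas p (hprime p hp)))
    have hint : Integrable (fun ω => Ψ (∑ p ∈ primesUpTo n, φ (p ^ ε p ω))) P :=
      Integrable.mono' (integrable_const Cb) hfmeas.aestronglyMeasurable
        (ae_of_all _ fun ω => by simpa [Real.norm_eq_abs] using hCb _)
    have hRHSint : ∫ ω in {ω | ∏ p ∈ primesUpTo n, p ^ ε p ω ≤ n},
        Ψ (∑ p ∈ primesUpTo n, φ (p ^ ε p ω)) ∂P
        = ∑ k ∈ Finset.Icc 1 n, Ψ (φ k) * (C * (k:ℝ≥0∞)⁻¹).toReal := by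
      rw [hAunion, setIntegral_biUnion_const P _ _ (fun k _ => hBmeas k) hdisj _ hint
        (fun k => Ψ (φ k)) ?_]
      · exact Finset.sum_congr rfl fun k hk => by rw [hBval k hk]
      · intro k hk ω hω
        have hx : ∏ p ∈ primesUpTo n, p ^ ε p ω = k := hω
        rw [← hx, ← phi_prod_primes φ hφ _ hprime _]
    rw [hLHS, hRHSint, hPA]
    have hc0 : 0 < C.toReal := ENNReal.toReal_pos hC0 hCtop
    rw [show (C * ENNReal.ofReal L).toReal = C.toReal * L by
      rw [ENNReal.toReal_mul, ENNReal.toReal_ofReal hL0.le]]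
    rw [Finset.sum_div]
    refine Finset.sum_congr rfl fun k hk => ?_
    have hk1 : (1:ℕ) ≤ k := (Finset.mem_Icc.mp hk).1
    have hkR : (0:ℝ) < (k:ℝ) := by exact_mod_cast hk1
    rw [ENNReal.toReal_mul, ENNReal.toReal_inv, ENNReal.toReal_natCast]
    field_simp
end
end

section
/- Reduction of the main theorem to the joint statistic: Let ϑ ∈ 𝒱 with degree α ≥ 0, let φ = ι[ϑ] be the induced additive function, and set Z_{n,1} = (1/ϑ(log n)) Σ_{p ∈ P_n} φ(p^{ε_p}) and Z_{n,2} = (1/log n) Σ_{p ∈ P_n} ε_p log p. Then for every bounded measurable Ψ : ℝ → ℝ and every n ≥ 2, E[ Ψ( φ(H_n)/ϑ(log n) ) ] = E[ Ψ(Z_{n,1}) · 1_{ Z_{n,2} ≤ 1 } ] / P[ Z_{n,2} ≤ 1 ]. -/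
open MeasureTheory ProbabilityTheory Filter Real Set
open scoped ENNReal NNReal

noncomputable section

/-- The additive function `ι[ϑ]` induced by `ϑ`: `ι[ϑ](k) = ∑_p ϑ(ν_p(k) log p)`. -/
def inducedAdditive (ϑ : ℝ → ℝ) (k : ℕ) : ℝ :=
  ∑ p ∈ k.primeFactors, ϑ (k.factorization p * Real.log p)

lemma fact_prod_pow {s : Finset ℕ} (hs : ∀ p ∈ s, p.Prime) (e : ℕ → ℕ) {q : ℕ} (hq : q ∈ s) :
    (∏ p ∈ s, p ^ e p).factorization q = e q := by
  rw [Nat.factorization_prod (fun p hp => pow_ne_zero _ (hs p hp).pos.ne')]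
  rw [Finset.sum_apply']
  rw [Finset.sum_eq_single q]
  · rw [(hs q hq).factorization_pow, Finsupp.single_eq_same]
  · intro p hp hne
    rw [(hs p hp).factorization_pow, Finsupp.single_eq_of_ne' hne]
  · intro h; exact absurd hq h

lemma prod_pow_fact {s : Finset ℕ} {k : ℕ} (hk : k ≠ 0)
    (hsub : k.primeFactors ⊆ s) : ∏ p ∈ s, p ^ k.factorization p = k := by
  have h : ∏ p ∈ k.primeFactors, p ^ k.factorization p = k := by
    rw [← Nat.support_factorization, ← Finsupp.prod]
    exact Nat.factorization_prod_pow_eq_self hk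
  conv_rhs => rw [← h]
  refine (Finset.prod_subset hsub fun p _ hp => ?_).symm
  rw [← Nat.support_factorization] at hp
  simp [Finsupp.notMem_support_iff.mp hp]

lemma inducedAdditive_prime_pow {ϑ : ℝ → ℝ} (hϑ0 : ϑ 0 = 0) {p : ℕ} (hp : p.Prime) (e : ℕ) :
    inducedAdditive ϑ (p ^ e) = ϑ (e * Real.log p) := by
  rcases Nat.eq_zero_or_pos e with rfl | he
  · simp [inducedAdditive, hϑ0]
  · rw [inducedAdditive, Nat.primeFactors_prime_pow he.ne' hp, Finset.sum_singleton,
      hp.factorization_pow, Finsupp.single_eq_same]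

lemma sum_inducedAdditive {ϑ : ℝ → ℝ} (hϑ0 : ϑ 0 = 0) {s : Finset ℕ}
    (hs : ∀ p ∈ s, p.Prime) (e : ℕ → ℕ) :
    ∑ p ∈ s, inducedAdditive ϑ (p ^ e p) = inducedAdditive ϑ (∏ p ∈ s, p ^ e p) := by
  have hsub : (∏ p ∈ s, p ^ e p).primeFactors ⊆ s := by
    intro q hq
    rw [Nat.mem_primeFactors] at hq
    obtain ⟨hqp, hdvd, -⟩ := hq
    obtain ⟨p, hps, hpd⟩ := hqp.prime.exists_mem_finset_dvd hdvd
    have : q ∣ p := hqp.dvd_of_dvd_pow hpd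
    rwa [(Nat.prime_dvd_prime_iff_eq hqp (hs p hps)).mp this]
  rw [inducedAdditive]
  rw [Finset.sum_subset hsub]
  · refine Finset.sum_congr rfl fun p hp => ?_
    rw [inducedAdditive_prime_pow hϑ0 (hs p hp), fact_prod_pow hs e hp]
  · intro p _ hp
    rw [← Nat.support_factorization] at hp
    simp [Finsupp.notMem_support_iff.mp hp, hϑ0]

/-- Reduction of the main theorem to the joint statistic: for `φ = ι[ϑ]`,
`Z_{n,1} = ϑ(log n)⁻¹ ∑_{p ∈ Pₙ} φ(p^{ε_p})` and `Z_{n,2} = (log n)⁻¹ ∑_{p ∈ Pₙ} ε_p log p`,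
one has `E[Ψ(φ(Hₙ)/ϑ(log n))] = E[Ψ(Z_{n,1}) 1_{Z_{n,2} ≤ 1}]/P[Z_{n,2} ≤ 1]` for every
bounded measurable `Ψ` and every `n ≥ 2`. -/
theorem reduction_to_joint_statistic
    {Ω : Type*} [MeasurableSpace Ω] (P : Measure Ω) [IsProbabilityMeasure P]
    (ε : ℕ → Ω → ℕ) (hmeas : ∀ p, Nat.Prime p → Measurable (ε p))
    (hindep : iIndepFun (fun p : {p : ℕ // p.Prime} => ε p) P)
    (hgeom : ∀ p, Nat.Prime p → GeomLaw P p (ε p))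
    {Ω' : Type*} [MeasurableSpace Ω'] (P' : Measure Ω') [IsProbabilityMeasure P']
    (ϑ : ℝ → ℝ) (α : ℝ) (hϑ : MemV ϑ α)
    (n : ℕ) (hn : 2 ≤ n)
    (H : Ω' → ℕ) (hHmeas : Measurable H) (hH : HarmonicLaw P' n H)
    (Ψ : ℝ → ℝ) (hΨm : Measurable Ψ) (hΨb : ∃ C, ∀ x, |Ψ x| ≤ C) :
    ∫ ω, Ψ (inducedAdditive ϑ (H ω) / ϑ (Real.log n)) ∂P' =
      (∫ ω in {ω | (Real.log n)⁻¹ * ∑ p ∈ primesUpTo n, (ε p ω : ℝ) * Real.log p ≤ 1},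
          Ψ ((ϑ (Real.log n))⁻¹ * ∑ p ∈ primesUpTo n, inducedAdditive ϑ (p ^ ε p ω)) ∂P) /
        (P {ω | (Real.log n)⁻¹ * ∑ p ∈ primesUpTo n, (ε p ω : ℝ) * Real.log p ≤ 1}).toReal := by
  obtain ⟨hϑ0, -⟩ := hϑ
  obtain ⟨C, hC⟩ := hΨb
  set s := primesUpTo n with hs_def
  have hsprime : ∀ p ∈ s, p.Prime := fun p hp => (mem_primesUpTo.mp hp).2
  have hn1 : (1:ℝ) < (n:ℝ) := by exact_mod_cast Nat.lt_of_lt_of_le one_lt_two hn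
  have hlogn : 0 < Real.log n := Real.log_pos hn1
  set L : ℝ := ∑ j ∈ Finset.Icc 1 n, (1 : ℝ) / j with hL_def
  have hL : 0 < L := Finset.sum_pos
    (fun j hj => by
      have h1 : 1 ≤ j := (Finset.mem_Icc.mp hj).1
      have : (0:ℝ) < j := by exact_mod_cast h1
      positivity)
    ⟨1, Finset.mem_Icc.mpr ⟨le_refl 1, by omega⟩⟩
  set t := ϑ (Real.log n) with ht_def
  set f : ℕ → ℝ := fun k => Ψ (inducedAdditive ϑ k / t) with hf_def
  set T : Ω → ℕ := fun ω => ∏ p ∈ s, p ^ ε p ω with hT_def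
  set c : ℝ := ∏ p ∈ s, (1 - (p:ℝ)⁻¹) with hc_def
  have hc : 0 < c := Finset.prod_pos fun p hp => by
    have h2 : (1:ℝ) < p := by exact_mod_cast (hsprime p hp).one_lt
    have : (p:ℝ)⁻¹ < 1 := inv_lt_one_of_one_lt₀ h2
    linarith
  set E : ℕ → Set Ω := fun k => {ω | T ω = k} with hE_def
  have hsub : ∀ k ∈ Finset.Icc 1 n, k.primeFactors ⊆ s := by
    intro k hk q hq
    obtain ⟨hk1, hkn⟩ := Finset.mem_Icc.mp hk
    exact mem_primesUpTo.mpr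
      ⟨(Nat.le_of_dvd (by omega) (Nat.dvd_of_mem_primeFactors hq)).trans hkn,
        Nat.prime_of_mem_primeFactors hq⟩
  have hE_inter : ∀ k ∈ Finset.Icc 1 n, E k = ⋂ p ∈ s, ε p ⁻¹' {k.factorization p} := by
    intro k hk
    obtain ⟨hk1, hkn⟩ := Finset.mem_Icc.mp hk
    ext ω
    simp only [hE_def, Set.mem_setOf_eq, Set.mem_iInter, Set.mem_preimage,
      Set.mem_singleton_iff]
    constructor
    · rintro rfl p hp
      exact (fact_prod_pow hsprime (fun q => ε q ω) hp).symm
    · intro h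
      have heq : T ω = ∏ p ∈ s, p ^ k.factorization p :=
        Finset.prod_congr rfl fun p hp => by rw [h p hp]
      rw [heq]
      exact prod_pow_fact (by omega) (hsub k hk)
  have hEmeas : ∀ k ∈ Finset.Icc 1 n, MeasurableSet (E k) := by
    intro k hk
    rw [hE_inter k hk]
    exact MeasurableSet.biInter (Set.to_countable _)
      fun p hp => (hmeas p (hsprime p hp)) (measurableSet_singleton _)
  have hPE : ∀ k ∈ Finset.Icc 1 n, P (E k)
      = ∏ p ∈ s, ((1 - (p:ℝ≥0∞)⁻¹) * ((p:ℝ≥0∞)⁻¹) ^ k.factorization p) := by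
    intro k hk
    rw [hE_inter k hk]
    have key := hindep.measure_inter_preimage_eq_mul (S := s.subtype Nat.Prime)
      (sets := fun i => {k.factorization i.1}) (fun i _ => measurableSet_singleton _)
    have hset : (⋂ i ∈ s.subtype Nat.Prime,
        (fun p : {p : ℕ // p.Prime} => ε p) i ⁻¹' {k.factorization i.1})
        = ⋂ p ∈ s, ε p ⁻¹' {k.factorization p} := by
      ext ω
      simp only [Set.mem_iInter, Finset.mem_subtype, Set.mem_preimage,
        Set.mem_singleton_iff, Subtype.forall]
      constructor
      · intro h p hp; exact h p (hsprime p hp) hp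
      · intro h p _ hp; exact h p hp
    rw [hset] at key
    have key2 := Finset.prod_subtype_eq_prod_filter (s := s) (p := Nat.Prime)
      (fun p => P (ε p ⁻¹' {k.factorization p}))
    rw [Finset.filter_true_of_mem hsprime] at key2
    rw [key]
    exact key2.trans (Finset.prod_congr rfl fun p hp => hgeom p (hsprime p hp) _)
  have hPEreal : ∀ k ∈ Finset.Icc 1 n, (P (E k)).toReal = c / (k:ℝ) := by
    intro k hk
    obtain ⟨hk1, hkn⟩ := Finset.mem_Icc.mp hk
    rw [hPE k hk, ENNReal.toReal_prod]
    have hterm : ∀ p ∈ s, ((1 - (p:ℝ≥0∞)⁻¹) * ((p:ℝ≥0∞)⁻¹) ^ k.factorization p).toReal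
        = (1 - (p:ℝ)⁻¹) * ((p:ℝ)⁻¹) ^ k.factorization p := by
      intro p hp
      have hple : ((p:ℝ≥0∞))⁻¹ ≤ 1 := by
        rw [ENNReal.inv_le_one]
        exact_mod_cast Nat.one_le_iff_ne_zero.mpr (hsprime p hp).pos.ne'
      rw [ENNReal.toReal_mul, ENNReal.toReal_pow,
        ENNReal.toReal_sub_of_le hple ENNReal.one_ne_top]
      simp [ENNReal.toReal_inv]
    rw [Finset.prod_congr rfl hterm, Finset.prod_mul_distrib]
    have hprod : ∏ p ∈ s, ((p:ℝ)⁻¹) ^ k.factorization p = ((k:ℝ))⁻¹ := by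
      have : (∏ p ∈ s, p ^ k.factorization p : ℕ) = k := prod_pow_fact (by omega) (hsub k hk)
      calc ∏ p ∈ s, ((p:ℝ)⁻¹) ^ k.factorization p
          = (∏ p ∈ s, (p:ℝ) ^ k.factorization p)⁻¹ := by
            rw [← Finset.prod_inv_distrib]
            exact Finset.prod_congr rfl fun p hp => (inv_pow _ _)
        _ = ((k:ℝ))⁻¹ := by
            congr 1
            exact_mod_cast congrArg (Nat.cast (R := ℝ)) this
    rw [hprod, div_eq_mul_inv]
  have hTpos : ∀ ω, 1 ≤ T ω := fun ω =>
    Finset.one_le_prod' fun p hp => Nat.one_le_pow _ _ (hsprime p hp).pos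
  have hlogT : ∀ ω, ∑ p ∈ s, (ε p ω : ℝ) * Real.log p = Real.log (T ω) := by
    intro ω
    have hcast : ((T ω : ℕ) : ℝ) = ∏ p ∈ s, (p:ℝ) ^ ε p ω := by
      rw [hT_def]; push_cast; rfl
    rw [hcast, Real.log_prod (fun p hp => by
      have : (0:ℝ) < p := by exact_mod_cast (hsprime p hp).pos
      positivity)]
    exact Finset.sum_congr rfl fun p hp => (Real.log_pow _ _).symm
  have hA : {ω | (Real.log n)⁻¹ * ∑ p ∈ s, (ε p ω : ℝ) * Real.log p ≤ 1}
      = ⋃ k ∈ Finset.Icc 1 n, E k := by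
    ext ω
    simp only [Set.mem_setOf_eq, Set.mem_iUnion, hE_def]
    rw [inv_mul_eq_div, div_le_one hlogn, hlogT ω]
    have hT0 : (0:ℝ) < (T ω : ℝ) := by exact_mod_cast hTpos ω
    rw [Real.log_le_log_iff hT0 (by linarith), Nat.cast_le]
    constructor
    · intro hTn; exact ⟨T ω, Finset.mem_Icc.mpr ⟨hTpos ω, hTn⟩, rfl⟩
    · rintro ⟨k, hk, rfl⟩; exact (Finset.mem_Icc.mp hk).2
  have hdisj : (↑(Finset.Icc 1 n) : Set ℕ).PairwiseDisjoint E := by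
    intro j _ k _ hjk
    simp only [Function.onFun, hE_def]
    rw [Set.disjoint_left]
    intro ω h1 h2
    exact hjk ((Set.mem_setOf_eq ▸ h1).symm.trans h2)
  have hint : ∀ ω, Ψ (t⁻¹ * ∑ p ∈ s, inducedAdditive ϑ (p ^ ε p ω)) = f (T ω) := by
    intro ω
    rw [sum_inducedAdditive hϑ0 hsprime, inv_mul_eq_div]
  have hIntOn : ∀ k ∈ Finset.Icc 1 n,
      IntegrableOn (fun ω => Ψ (t⁻¹ * ∑ p ∈ s, inducedAdditive ϑ (p ^ ε p ω))) (E k) P := by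
    intro k hk
    refine (integrableOn_const (C := f k) (measure_ne_top P _)).congr_fun
      (fun ω hω => ?_) (hEmeas k hk)
    exact ((hint ω).trans (congrArg f (hω : T ω = k))).symm
  -- LHS
  have hHE : ∀ k : ℕ, MeasurableSet {ω | H ω = k} :=
    fun k => hHmeas (measurableSet_singleton k)
  have hHdisj : (↑(Finset.Icc 1 n) : Set ℕ).PairwiseDisjoint
      (fun k => {ω : Ω' | H ω = k}) := by
    intro j _ k _ hjk
    simp only [Function.onFun]
    rw [Set.disjoint_left]
    intro ω h1 h2
    exact hjk ((Set.mem_setOf_eq ▸ h1).symm.trans h2)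
  set U : Set Ω' := ⋃ k ∈ Finset.Icc 1 n, {ω : Ω' | H ω = k} with hU_def
  have hUmeas : MeasurableSet U :=
    MeasurableSet.biUnion (Set.to_countable _) fun k _ => hHE k
  have hUone : P' U = 1 := by
    rw [hU_def, measure_biUnion_finset hHdisj fun k _ => hHE k]
    rw [Finset.sum_congr rfl hH]
    rw [← ENNReal.ofReal_sum_of_nonneg (fun k hk => by
      have h1 : 1 ≤ k := (Finset.mem_Icc.mp hk).1
      have hk0 : (0:ℝ) < k := by exact_mod_cast h1
      positivity)]
    have hsum1 : ∑ k ∈ Finset.Icc 1 n, 1 / ((k:ℝ) * L) = 1 := by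
      have hterm : ∀ k ∈ Finset.Icc 1 n, 1 / ((k:ℝ) * L) = (1 / (k:ℝ)) * (1 / L) := by
        intro k _; rw [div_mul_div_comm, one_mul]
      rw [Finset.sum_congr rfl hterm, ← Finset.sum_mul, ← hL_def, mul_one_div,
        div_self hL.ne']
    rw [hsum1, ENNReal.ofReal_one]
  have hae : ∀ᵐ ω ∂P', ω ∈ U := by
    rw [ae_iff]
    have hcompl : {ω | ¬ ω ∈ U} = Uᶜ := rfl
    rw [hcompl, measure_compl hUmeas (measure_ne_top _ _), hUone, measure_univ, tsub_self]
  have hLHS : ∫ ω, Ψ (inducedAdditive ϑ (H ω) / t) ∂P'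
      = ∑ k ∈ Finset.Icc 1 n, f k * (P' {ω | H ω = k}).toReal := by
    have h1 : (fun ω => Ψ (inducedAdditive ϑ (H ω) / t))
        =ᵐ[P'] U.indicator (fun ω => Ψ (inducedAdditive ϑ (H ω) / t)) :=
      hae.mono fun ω hω => (Set.indicator_of_mem hω (fun ω => Ψ (inducedAdditive ϑ (H ω) / t))).symm
    rw [integral_congr_ae h1, integral_indicator hUmeas, hU_def]
    rw [integral_biUnion_finset _ (fun k _ => hHE k) hHdisj (fun k hk =>
      (integrableOn_const (C := f k) (measure_ne_top P' _)).congr_fun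
        (fun ω hω => (congrArg f (hω : H ω = k)).symm)
        (hHE k))]
    refine Finset.sum_congr rfl fun k hk => ?_
    rw [setIntegral_congr_fun (hHE k)
      (fun ω hω => (congrArg f (hω : H ω = k)) : Set.EqOn _ (fun _ => f k) _),
      setIntegral_const, smul_eq_mul, mul_comm, measureReal_def]
  rw [hLHS, hA]
  rw [integral_biUnion_finset _ hEmeas hdisj hIntOn]
  rw [measure_biUnion_finset hdisj hEmeas]
  rw [ENNReal.toReal_sum (fun k _ => measure_ne_top P _)]
  have hnum : ∀ k ∈ Finset.Icc 1 n,
      (∫ ω in E k, Ψ (t⁻¹ * ∑ p ∈ s, inducedAdditive ϑ (p ^ ε p ω)) ∂P)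
        = f k * (P (E k)).toReal := by
    intro k hk
    rw [setIntegral_congr_fun (hEmeas k hk)
      (fun ω hω => ((hint ω).trans (congrArg f (hω : T ω = k))) :
        Set.EqOn _ (fun _ => f k) _),
      setIntegral_const, smul_eq_mul, mul_comm, measureReal_def]
  rw [Finset.sum_congr rfl hnum, Finset.sum_congr rfl hPEreal,
    Finset.sum_congr rfl (fun k hk => by rw [hH k hk] :
      ∀ k ∈ Finset.Icc 1 n, f k * (P' {ω | H ω = k}).toReal
        = f k * (ENNReal.ofReal (1 / ((k:ℝ) * L))).toReal)]
  have hden : ∑ k ∈ Finset.Icc 1 n, c / (k:ℝ) = c * L := by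
    rw [hL_def, Finset.mul_sum]
    exact Finset.sum_congr rfl fun k _ => by rw [mul_one_div]
  rw [hden, Finset.sum_div]
  refine Finset.sum_congr rfl fun k hk => ?_
  have hk1 : 1 ≤ k := (Finset.mem_Icc.mp hk).1
  have hk0 : (0:ℝ) < k := by exact_mod_cast hk1
  rw [ENNReal.toReal_ofReal (by positivity), hPEreal k hk]
  field_simp
end
end
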